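/- Let C be a finite category and e an idempotent of the consolidation monoid C^cd with e ≠ 0 and e ≠ 1. Then e lies in some local monoid C_c = C(c,c), and the maximal subgroup of C^cd at e (the group of units of eC^cd e) equals the maximal subgroup of C_c at e. -/

import Mathlib

/-- A finite category presented by its set of arrows with a partial composition. -/
structure FinCat (Obj : Type) where
  Arr : Type
  src : Arr → Obj
  tgt : Arr → Obj
  id : Obj → Arr
  comp : (f g : Arr) → tgt f = src g → Arr
  src_id : ∀ a, src (id a) = a
  tgt_id : ∀ a, tgt (id a) = a
  src_comp : ∀ f g h, src (comp f g h) = src f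
  tgt_comp : ∀ f g h, tgt (comp f g h) = tgt g
  id_comp : ∀ (f : Arr) (h : tgt (id (src f)) = src f), comp (id (src f)) f h = f
  comp_id : ∀ (f : Arr) (h : tgt f = src (id (tgt f))), comp f (id (tgt f)) h = f
  assoc : ∀ (f g k : Arr) (h1 : tgt f = src g) (h2 : tgt g = src k) h3 h4,
    comp (comp f g h1) k h3 = comp f (comp g k h2) h4

/-- The underlying set of the consolidation monoid `C^cd`:
arrows of `C` together with an adjoined zero and identity. -/
inductive Cd {Obj : Type} (C : FinCat Obj) where
  | zero : Cd C
  | one : Cd C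
  | arr : C.Arr → Cd C

variable {Obj : Type} [DecidableEq Obj]

/-- Multiplication of the consolidation: composition where defined, `0` otherwise,
with `1` an adjoined identity and `0` absorbing. -/
def cdMul (C : FinCat Obj) : Cd C → Cd C → Cd C
  | .one, x => x
  | .zero, _ => .zero
  | x, .one => x
  | _, .zero => .zero
  | .arr f, .arr g => if h : C.tgt f = C.src g then .arr (C.comp f g h) else .zero

theorem cdMul_zero (C : FinCat Obj) (x : Cd C) : cdMul C x Cd.zero = Cd.zero := by
  cases x <;> rfl
theorem cdZero_mul (C : FinCat Obj) (x : Cd C) : cdMul C Cd.zero x = Cd.zero := by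
  cases x <;> rfl
theorem cdMul_one (C : FinCat Obj) (x : Cd C) : cdMul C x Cd.one = x := by
  cases x <;> rfl
theorem cdOne_mul (C : FinCat Obj) (x : Cd C) : cdMul C Cd.one x = x := by
  cases x <;> rfl

theorem cdMul_assoc (C : FinCat Obj) (x y z : Cd C) :
    cdMul C (cdMul C x y) z = cdMul C x (cdMul C y z) := by
  cases x <;> cases y <;> cases z <;>
    (try simp only [cdMul_zero, cdZero_mul, cdMul_one, cdOne_mul]) <;> (try rfl)
  case arr.arr.arr f g k =>
    by_cases h1 : C.tgt f = C.src g
    · by_cases h2 : C.tgt g = C.src k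
      · show cdMul C (dite _ _ _) _ = cdMul C _ (dite _ _ _)
        rw [dif_pos h1, dif_pos h2]
        show dite _ _ _ = dite _ _ _
        rw [dif_pos (show C.tgt (C.comp f g h1) = C.src k by rw [C.tgt_comp]; exact h2),
            dif_pos (show C.tgt f = C.src (C.comp g k h2) by rw [C.src_comp]; exact h1)]
        exact congrArg Cd.arr (C.assoc f g k h1 h2 _ _)
      · show cdMul C (dite _ _ _) _ = cdMul C _ (dite _ _ _)
        rw [dif_pos h1, dif_neg h2]
        show dite _ _ _ = Cd.zero
        rw [dif_neg (show ¬ C.tgt (C.comp f g h1) = C.src k by rw [C.tgt_comp]; exact h2)]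
    · show cdMul C (dite _ _ _) _ = cdMul C _ (cdMul C _ _)
      rw [dif_neg h1]
      by_cases h2 : C.tgt g = C.src k
      · show Cd.zero = cdMul C _ (dite _ _ _)
        rw [dif_pos h2]
        show Cd.zero = dite _ _ _
        rw [dif_neg (show ¬ C.tgt f = C.src (C.comp g k h2) by rw [C.src_comp]; exact h1)]
      · show Cd.zero = cdMul C _ (dite _ _ _)
        rw [dif_neg h2, cdMul_zero]

instance cdMonoid (C : FinCat Obj) : Monoid (Cd C) where
  mul := cdMul C
  one := .one
  one_mul x := by cases x <;> rfl
  mul_one x := by cases x <;> rfl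
  mul_assoc := cdMul_assoc C

/-- Green's R-equivalence in a monoid. -/
def RE {M : Type} [Monoid M] (s t : M) : Prop := (∃ a, s * a = t) ∧ (∃ a, t * a = s)
/-- Green's L-equivalence in a monoid. -/
def LE' {M : Type} [Monoid M] (s t : M) : Prop := (∃ a, a * s = t) ∧ (∃ a, a * t = s)
/-- Green's H-equivalence in a monoid. -/
def HE {M : Type} [Monoid M] (s t : M) : Prop := RE s t ∧ LE' s t
/-- Green's J-equivalence in a monoid. -/
def JE {M : Type} [Monoid M] (s t : M) : Prop :=
  (∃ a b, a * s * b = t) ∧ (∃ a b, a * t * b = s)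

/-- Green's R-equivalence relative to a subset `S` (multipliers taken in `S`). -/
def REOn {M : Type} [Monoid M] (S : Set M) (s t : M) : Prop :=
  (∃ a ∈ S, s * a = t) ∧ (∃ a ∈ S, t * a = s)
def LEOn {M : Type} [Monoid M] (S : Set M) (s t : M) : Prop :=
  (∃ a ∈ S, a * s = t) ∧ (∃ a ∈ S, a * t = s)
def HEOn {M : Type} [Monoid M] (S : Set M) (s t : M) : Prop := REOn S s t ∧ LEOn S s t
def JEOn {M : Type} [Monoid M] (S : Set M) (s t : M) : Prop :=
  (∃ a ∈ S, ∃ b ∈ S, a * s * b = t) ∧ (∃ a ∈ S, ∃ b ∈ S, a * t * b = s)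

/-- The local monoid `C_c = C(c,c)`, viewed as a subset of the consolidation. -/
def locSet (C : FinCat Obj) (c : Obj) : Set (Cd C) :=
  {x | ∃ f : C.Arr, x = Cd.arr f ∧ C.src f = c ∧ C.tgt f = c}

theorem mul_def (C : FinCat Obj) (x y : Cd C) : x * y = cdMul C x y := rfl

theorem arr_mul_arr (C : FinCat Obj) (f g : C.Arr) :
    (Cd.arr f : Cd C) * Cd.arr g =
      if h : C.tgt f = C.src g then Cd.arr (C.comp f g h) else Cd.zero := rfl

/-- src of a right-multiple. -/
theorem src_of_mul (C : FinCat Obj) {f g : C.Arr} {a : Cd C}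
    (h : (Cd.arr f : Cd C) * a = Cd.arr g) : C.src g = C.src f := by
  cases a with
  | zero => rw [mul_def, cdMul_zero] at h; exact (nomatch h)
  | one => rw [mul_def, cdMul_one] at h; cases h; rfl
  | arr u =>
    rw [arr_mul_arr] at h
    by_cases hd : C.tgt f = C.src u
    · rw [dif_pos hd] at h; cases h; rw [C.src_comp]
    · rw [dif_neg hd] at h; exact (nomatch h)

/-- tgt of a left-multiple. -/
theorem tgt_of_mul (C : FinCat Obj) {f g : C.Arr} {a : Cd C}
    (h : a * (Cd.arr f : Cd C) = Cd.arr g) : C.tgt g = C.tgt f := by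
  cases a with
  | zero => rw [mul_def, cdZero_mul] at h; exact (nomatch h)
  | one => rw [mul_def, cdOne_mul] at h; cases h; rfl
  | arr u =>
    rw [arr_mul_arr] at h
    by_cases hd : C.tgt u = C.src f
    · rw [dif_pos hd] at h; cases h; rw [C.tgt_comp]
    · rw [dif_neg hd] at h; exact (nomatch h)

theorem cdArr_mul_ne_one (C : FinCat Obj) (f : C.Arr) (a : Cd C) :
    (Cd.arr f : Cd C) * a ≠ Cd.one := by
  cases a with
  | zero => rw [mul_def, cdMul_zero]; exact fun h => (nomatch h)
  | one => rw [mul_def, cdMul_one]; exact fun h => (nomatch h)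
  | arr u =>
    rw [arr_mul_arr]
    by_cases hd : C.tgt f = C.src u
    · rw [dif_pos hd]; exact fun h => (nomatch h)
    · rw [dif_neg hd]; exact fun h => (nomatch h)

theorem id_mem_loc (C : FinCat Obj) (c : Obj) : (Cd.arr (C.id c) : Cd C) ∈ locSet C c :=
  ⟨C.id c, rfl, C.src_id c, C.tgt_id c⟩

/-- replace a right multiplier by one in the local monoid -/
theorem right_loc (C : FinCat Obj) {c : Obj} {g f : C.Arr}
    (hgt : C.tgt g = c) (hft : C.tgt f = c) {a : Cd C}
    (h : (Cd.arr g : Cd C) * a = Cd.arr f) :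
    ∃ a' ∈ locSet C c, (Cd.arr g : Cd C) * a' = Cd.arr f := by
  cases a with
  | zero => rw [mul_def, cdMul_zero] at h; exact (nomatch h)
  | one =>
    rw [mul_def, cdMul_one] at h; cases h
    refine ⟨Cd.arr (C.id c), id_mem_loc C c, ?_⟩
    rw [arr_mul_arr, dif_pos (by rw [C.src_id]; exact hgt)]
    subst hgt
    exact congrArg Cd.arr (C.comp_id g _)
  | arr u =>
    rw [arr_mul_arr] at h
    by_cases hd : C.tgt g = C.src u
    · rw [dif_pos hd] at h
      injection h with h'
      have hu : C.tgt u = c := by rw [← hft, ← h', C.tgt_comp]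
      exact ⟨Cd.arr u, ⟨u, rfl, hd ▸ hgt, hu⟩,
        by rw [arr_mul_arr, dif_pos hd, h']⟩
    · rw [dif_neg hd] at h; exact (nomatch h)

/-- replace a left multiplier by one in the local monoid -/
theorem left_loc (C : FinCat Obj) {c : Obj} {g f : C.Arr}
    (hgs : C.src g = c) (hfs : C.src f = c) {a : Cd C}
    (h : a * (Cd.arr g : Cd C) = Cd.arr f) :
    ∃ a' ∈ locSet C c, a' * (Cd.arr g : Cd C) = Cd.arr f := by
  cases a with
  | zero => rw [mul_def, cdZero_mul] at h; exact (nomatch h)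
  | one =>
    rw [mul_def, cdOne_mul] at h; cases h
    refine ⟨Cd.arr (C.id c), id_mem_loc C c, ?_⟩
    rw [arr_mul_arr, dif_pos (by rw [C.tgt_id]; exact hgs.symm)]
    subst hgs
    exact congrArg Cd.arr (C.id_comp g _)
  | arr u =>
    rw [arr_mul_arr] at h
    by_cases hd : C.tgt u = C.src g
    · rw [dif_pos hd] at h
      injection h with h'
      have hu : C.src u = c := by rw [← hfs, ← h', C.src_comp]
      exact ⟨Cd.arr u, ⟨u, rfl, hu, hd ▸ hgs⟩,
        by rw [arr_mul_arr, dif_pos hd, h']⟩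
    · rw [dif_neg hd] at h; exact (nomatch h)

/-- an idempotent `e ≠ 0, 1` of `C^cd` lies in some local monoid `C_c`,
and the maximal subgroup (H-class) of `C^cd` at `e` equals that of `C_c` at `e`. -/
theorem stmt_11 (C : FinCat Obj) [Fintype Obj] [Fintype C.Arr]
    (e : Cd C) (he : e * e = e) (h0 : e ≠ Cd.zero) (h1 : e ≠ Cd.one) :
    ∃ c : Obj, e ∈ locSet C c ∧
      {z : Cd C | HE z e} = {z ∈ locSet C c | HEOn (locSet C c) z e} := by
  rcases e with _ | _ | f
  · exact absurd rfl h0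
  · exact absurd rfl h1
  -- e = Cd.arr f
  rw [arr_mul_arr] at he
  by_cases hc : C.tgt f = C.src f
  swap
  · rw [dif_neg hc] at he; exact absurd he.symm (fun h => (nomatch h))
  rw [dif_pos hc] at he
  refine ⟨C.src f, ⟨f, rfl, rfl, hc⟩, ?_⟩
  set c := C.src f with hcdef
  have hemem : (Cd.arr f : Cd C) ∈ locSet C c := ⟨f, rfl, rfl, hc⟩
  ext z
  simp only [Set.mem_setOf_eq, Set.mem_sep_iff]
  constructor
  · rintro ⟨⟨⟨a, ha1⟩, ⟨a', ha2⟩⟩, ⟨b, hb1⟩, ⟨b', hb2⟩⟩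
    -- z ≠ zero, z ≠ one
    have hz0 : z ≠ Cd.zero := by
      rintro rfl
      rw [mul_def, cdZero_mul] at ha1; exact (nomatch ha1)
    have hz1 : z ≠ Cd.one := by
      rintro rfl
      exact cdArr_mul_ne_one C f a' ha2
    rcases z with _ | _ | g
    · exact absurd rfl hz0
    · exact absurd rfl hz1
    have hgs : C.src g = c := src_of_mul C ha2
    have hgt : C.tgt g = c := hc ▸ tgt_of_mul C hb2
    refine ⟨⟨g, rfl, hgs, hgt⟩, ⟨⟨?_, ?_⟩, ?_, ?_⟩⟩
    · exact right_loc C hgt hc ha1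
    · exact right_loc C hc hgt ha2
    · exact left_loc C hgs rfl hb1
    · exact left_loc C rfl hgs hb2
  · rintro ⟨_, ⟨⟨a, _, ha1⟩, ⟨a', _, ha2⟩⟩, ⟨b, _, hb1⟩, ⟨b', _, hb2⟩⟩
    exact ⟨⟨⟨a, ha1⟩, ⟨a', ha2⟩⟩, ⟨b, hb1⟩, ⟨b', hb2⟩⟩
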